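/- Let (μₙ) be a sequence of Borel probability measures on [0,1], each a Rajchman measure on ℝ (μ̂ₙ(s) → 0 as |s| → ∞), with supports shrinking to zero. Then there exist a subsequence (nₖ) and a sequence εₖ → 0⁺ such that, with λₖ the uniform probability measure on [0, εₖ], we have Σₖ |λ̂ₖ(s) - μ̂_{nₖ}(s)|² ≤ 5 for all s ∈ ℝ. -/

import Mathlib

open MeasureTheory Complex Real Set Filter

noncomputable def Fhat (μ : Measure ℝ) (s : ℝ) : ℂ := ∫ x : ℝ, Complex.exp (-2 * π * I * s * x) ∂μ

lemma norm_e (s x : ℝ) : ‖Complex.exp (-2 * π * I * s * x)‖ = 1 := by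
  rw [Complex.norm_exp]
  norm_num [Complex.ext_iff]

lemma e_sub_one (s x : ℝ) (h : 2 * π * |s| * |x| ≤ 1) :
    ‖Complex.exp (-2 * π * I * s * x) - 1‖ ≤ 4 * π * |s| * |x| := by
  have h1 : ‖(-2 * π * I * s * x : ℂ)‖ = 2 * π * |s| * |x| := by
    simp [abs_of_pos Real.pi_pos]
  have := Complex.norm_exp_sub_one_le (x := -2 * π * I * s * x) (by rw [h1]; exact h)
  rw [h1] at this
  calc ‖Complex.exp (-2 * π * I * s * x) - 1‖ ≤ 2 * (2 * π * |s| * |x|) := this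
    _ = 4 * π * |s| * |x| := by ring

lemma e_int (μ : Measure ℝ) [IsFiniteMeasure μ] (s : ℝ) :
    Integrable (fun x : ℝ => Complex.exp (-2 * π * I * s * x)) μ := by
  refine (integrable_const (1:ℝ)).mono' ?_ ?_
  · exact (Complex.continuous_exp.comp (by continuity)).aestronglyMeasurable
  · filter_upwards with x using le_of_eq (norm_e s x)

lemma Fhat_norm_le (μ : Measure ℝ) [IsProbabilityMeasure μ] (s : ℝ) : ‖Fhat μ s‖ ≤ 1 := by
  have := norm_integral_le_of_norm_le_const (μ := μ) (C := 1)
    (f := fun x : ℝ => Complex.exp (-2 * π * I * s * x))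
    (by filter_upwards with x using le_of_eq (norm_e s x))
  simpa [Fhat] using this

lemma Fhat_near_one (μ : Measure ℝ) [IsProbabilityMeasure μ] (d s : ℝ) (hd : 0 < d)
    (hs : μ (Icc (0:ℝ) d)ᶜ = 0) (h : 2 * π * |s| * d ≤ 1) :
    ‖Fhat μ s - 1‖ ≤ 4 * π * |s| * d := by
  have hae : ∀ᵐ x ∂μ, x ∈ Icc (0:ℝ) d := by
    rw [ae_iff]
    convert hs using 2
    rfl
  have h1 : (1 : ℂ) = ∫ _ : ℝ, (1 : ℂ) ∂μ := by simp
  rw [Fhat, h1, ← integral_sub (e_int μ s) (integrable_const 1)]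
  have := norm_integral_le_of_norm_le_const (μ := μ) (C := 4 * π * |s| * d)
    (f := fun x : ℝ => Complex.exp (-2 * π * I * s * x) - 1) ?_
  · simpa using this
  · filter_upwards [hae] with x hx
    have hx0 : 0 ≤ x := hx.1
    have hxd : x ≤ d := hx.2
    have hxx : |x| = x := abs_of_nonneg hx0
    have : 2 * π * |s| * |x| ≤ 1 := by
      refine le_trans ?_ h
      rw [hxx]
      have : 0 ≤ 2 * π * |s| := by positivity
      nlinarith
    refine le_trans (e_sub_one s x this) ?_
    rw [hxx]
    have : 0 ≤ 4 * π * |s| := by positivity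
    nlinarith

noncomputable def Ghat (ε s : ℝ) : ℂ := ∫ x : ℝ in Icc (0:ℝ) ε, ε⁻¹ • Complex.exp (-2 * π * I * s * x)

lemma vol_Icc (ε : ℝ) (hε : 0 < ε) :
    ((volume.restrict (Icc (0:ℝ) ε)) univ).toReal = ε := by
  simp [Measure.restrict_apply_univ, Real.volume_Icc, ENNReal.toReal_ofReal hε.le]

instance (ε : ℝ) : IsFiniteMeasure (volume.restrict (Icc (0:ℝ) ε)) := by
  constructor
  rw [Measure.restrict_apply_univ, Real.volume_Icc]
  exact ENNReal.ofReal_lt_top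

lemma Ghat_norm_le (ε s : ℝ) (hε : 0 < ε) : ‖Ghat ε s‖ ≤ 1 := by
  have := norm_integral_le_of_norm_le_const (μ := volume.restrict (Icc (0:ℝ) ε)) (C := ε⁻¹)
    (f := fun x : ℝ => ε⁻¹ • Complex.exp (-2 * π * I * s * x)) ?_
  · rw [measureReal_def, vol_Icc ε hε] at this
    calc ‖Ghat ε s‖ ≤ ε⁻¹ * ε := this
      _ = 1 := inv_mul_cancel₀ hε.ne'
  · filter_upwards with x
    rw [norm_smul, norm_e, Real.norm_eq_abs, abs_of_pos (inv_pos.2 hε)]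
    simp

lemma Ghat_near_one (ε s : ℝ) (hε : 0 < ε) (h : 2 * π * |s| * ε ≤ 1) :
    ‖Ghat ε s - 1‖ ≤ 4 * π * |s| * ε := by
  have hint : Integrable (fun x : ℝ => ε⁻¹ • Complex.exp (-2 * π * I * s * x))
      (volume.restrict (Icc (0:ℝ) ε)) := (e_int _ s).smul ε⁻¹
  have h1 : (1 : ℂ) = ∫ _ : ℝ in Icc (0:ℝ) ε, ε⁻¹ • (1:ℂ) := by
    rw [integral_const, measureReal_def, vol_Icc ε hε]
    rw [smul_smul, mul_inv_cancel₀ hε.ne', one_smul]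
  rw [Ghat, h1, ← integral_sub hint ((integrable_const _))]
  have := norm_integral_le_of_norm_le_const (μ := volume.restrict (Icc (0:ℝ) ε))
    (C := ε⁻¹ * (4 * π * |s| * ε))
    (f := fun x : ℝ => ε⁻¹ • Complex.exp (-2 * π * I * s * x) - ε⁻¹ • 1) ?_
  · rw [measureReal_def, vol_Icc ε hε] at this
    refine le_trans this (le_of_eq ?_)
    field_simp
  · filter_upwards [ae_restrict_mem (measurableSet_Icc (a := (0:ℝ)) (b := ε))] with x hx
    rw [← smul_sub, norm_smul, Real.norm_eq_abs, abs_of_pos (inv_pos.2 hε)]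
    have hb : 2 * π * |s| * |x| ≤ 1 := by
      refine le_trans ?_ h
      rw [_root_.abs_of_nonneg hx.1]
      have : 0 ≤ 2 * π * |s| := by positivity
      nlinarith [hx.2]
    refine mul_le_mul_of_nonneg_left ?_ (inv_pos.2 hε).le
    refine le_trans (e_sub_one s x hb) ?_
    rw [_root_.abs_of_nonneg hx.1]
    have : 0 ≤ 4 * π * |s| := by positivity
    nlinarith [hx.2]

lemma Ghat_far (ε s : ℝ) (hε : 0 < ε) (hs : s ≠ 0) : ‖Ghat ε s‖ ≤ 1 / (π * |s| * ε) := by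
  have hc : (-2 * (π:ℂ) * I * s) ≠ 0 := by
    simp [Complex.ext_iff, Real.pi_ne_zero, hs]
  have key : Ghat ε s = ε⁻¹ • ((Complex.exp (-2 * π * I * s * ε) - 1) / (-2 * π * I * s)) := by
    rw [Ghat, integral_smul, integral_Icc_eq_integral_Ioc,
      ← intervalIntegral.integral_of_le hε.le]
    congr 1
    have := integral_exp_mul_complex (a := 0) (b := ε) hc
    simpa using this
  rw [key, norm_smul, Real.norm_eq_abs, abs_of_pos (inv_pos.2 hε), norm_div]
  have hd : ‖(-2 * (π:ℂ) * I * s)‖ = 2 * π * |s| := by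
    simp [abs_of_pos Real.pi_pos]
  have hnum : ‖Complex.exp (-2 * π * I * s * ε) - 1‖ ≤ 2 := by
    calc ‖Complex.exp (-2 * π * I * s * (ε:ℝ)) - 1‖
        ≤ ‖Complex.exp (-2 * π * I * s * (ε:ℝ))‖ + ‖(1:ℂ)‖ := norm_sub_le _ _
      _ ≤ 2 := by rw [norm_e s ε]; norm_num
  rw [hd]
  have hpos : (0:ℝ) < 2 * π * |s| := by positivity
  calc ε⁻¹ * (‖Complex.exp (-2 * π * I * s * ε) - 1‖ / (2 * π * |s|))
      ≤ ε⁻¹ * (2 / (2 * π * |s|)) := by gcongr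
    _ = 1 / (π * |s| * ε) := by
        field_simp

lemma rajchman_T (ν : Measure ℝ)
    (h : Tendsto (fun s : ℝ => ∫ x : ℝ, Complex.exp (-2 * π * I * s * x) ∂ν)
      (cocompact ℝ) (nhds 0)) (c : ℝ) (hc : 0 < c) :
    ∃ T : ℝ, ∀ s : ℝ, T ≤ |s| → ‖Fhat ν s‖ ≤ c := by
  have h' : ∀ᶠ s in cocompact ℝ, ‖Fhat ν s‖ ≤ c := by
    have := h.eventually (Metric.closedBall_mem_nhds (0:ℂ) hc)
    filter_upwards [this] with s hs
    simpa [Fhat, Metric.mem_closedBall, dist_zero_right] using hs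
  rw [cocompact_eq_atBot_atTop, eventually_sup, eventually_atBot, eventually_atTop] at h'
  obtain ⟨⟨b, hb⟩, ⟨a, ha⟩⟩ := h'
  refine ⟨max a (-b), fun s hs => ?_⟩
  rcases le_abs.mp hs with h1 | h1
  · exact ha s (le_trans (le_max_left _ _) h1)
  · exact hb s (by linarith [le_trans (le_max_right a (-b)) h1])

noncomputable def myeta (k : ℕ) : ℝ := (2:ℝ)⁻¹ ^ (k+1)

lemma eta_pos (k : ℕ) : 0 < myeta k := by unfold myeta; positivity

lemma eta_le_one (k : ℕ) : myeta k ≤ 1 := by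
  have : (2:ℝ)⁻¹ ^ (k+1) ≤ 1 := pow_le_one₀ (by norm_num) (by norm_num)
  simpa [myeta] using this

theorem rajchman_subsequence_square_bound
    (μ : ℕ → Measure ℝ) (hprob : ∀ n, IsProbabilityMeasure (μ n))
    (δ : ℕ → ℝ) (hδ_pos : ∀ n, 0 < δ n) (hδ : Tendsto δ atTop (nhds 0))
    (hsupp : ∀ n, (μ n) (Icc (0:ℝ) (δ n))ᶜ = 0)
    (hRajchman : ∀ n, Tendsto (fun s : ℝ =>
        ∫ x : ℝ, Complex.exp (-2 * π * I * s * x) ∂(μ n)) (cocompact ℝ) (nhds 0)) :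
    ∃ (nk : ℕ → ℕ) (ε : ℕ → ℝ), StrictMono nk ∧ (∀ k, 0 < ε k) ∧
      Tendsto ε atTop (nhds 0) ∧
      ∀ s : ℝ,
        (∑' k : ℕ,
          ‖(∫ x : ℝ in Icc (0:ℝ) (ε k), (ε k)⁻¹ • Complex.exp (-2 * π * I * s * x)) -
            (∫ x : ℝ, Complex.exp (-2 * π * I * s * x) ∂(μ (nk k)))‖ ^ 2) ≤ 5 := by
  have hπ := Real.pi_pos
  have step : ∀ (k : ℕ) (m : ℕ) (T : {T : ℝ // 1 ≤ T}),
      ∃ (n : ℕ) (e : ℝ) (T' : {T : ℝ // 1 ≤ T}),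
      m < n ∧ 0 < e ∧ e ≤ (2:ℝ)⁻¹ ^ k ∧ 8 * π * T.1 * e ≤ myeta k ∧
      8 * π * T.1 * δ n ≤ myeta k ∧ T.1 + 1 ≤ T'.1 ∧
      (∀ s : ℝ, T'.1 ≤ |s| → ‖Fhat (μ n) s‖ ≤ myeta k / 2) ∧
      (∀ s : ℝ, T'.1 ≤ |s| → 2 / myeta k ≤ π * |s| * e) := by
    intro k m T
    obtain ⟨T, hT⟩ := T
    have hT0 : 0 < T := by linarith
    have hηk := eta_pos k
    have hb : 0 < myeta k / (8 * π * T) := by positivity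
    obtain ⟨n, ⟨hn1, hn2⟩⟩ :=
      (((hδ.eventually (gt_mem_nhds hb)).and (eventually_gt_atTop m)).exists)
    set e := min (myeta k / (8 * π * T)) ((2:ℝ)⁻¹ ^ k) with he
    have he_pos : 0 < e := lt_min hb (by positivity)
    haveI := hprob n
    obtain ⟨T1, hT1⟩ := rajchman_T (μ n) (hRajchman n) (myeta k / 2) (by positivity)
    refine ⟨n, e, ⟨max (T + 1) (max T1 (2 / myeta k / (π * e))), by
        refine le_trans (by linarith) (le_max_left _ _)⟩,
      hn2, he_pos, min_le_right _ _, ?_, ?_, le_max_left _ _, ?_, ?_⟩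
    · have h1 : e ≤ myeta k / (8 * π * T) := min_le_left _ _
      have := (le_div_iff₀ (by positivity : (0:ℝ) < 8 * π * T)).1 h1
      linarith
    · have h1 : δ n ≤ myeta k / (8 * π * T) := hn1.le
      have := (le_div_iff₀ (by positivity : (0:ℝ) < 8 * π * T)).1 h1
      linarith
    · intro s hs
      exact hT1 s (le_trans (le_trans (le_max_left T1 _) (le_max_right (T+1) _)) hs)
    · intro s hs
      have hs' : 2 / myeta k / (π * e) ≤ |s| :=
        le_trans (le_trans (le_max_right T1 _) (le_max_right (T+1) _)) hs
      have h2 := (div_le_iff₀ (by positivity : (0:ℝ) < π * e)).mp hs'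
      have h3 : |s| * (π * e) = π * |s| * e := by ring
      linarith
  choose nfun efun Tfun hm hepos hele h8e h8d hTsucc hF hGe using step
  let prev : ℕ → ℕ × {T : ℝ // 1 ≤ T} := fun k =>
    Nat.rec ((0 : ℕ), ⟨1, le_refl 1⟩) (fun k p => (nfun k p.1 p.2, Tfun k p.1 p.2)) k
  set nk : ℕ → ℕ := fun k => nfun k (prev k).1 (prev k).2 with hnk
  set ε : ℕ → ℝ := fun k => efun k (prev k).1 (prev k).2 with hε
  set Ts : ℕ → ℝ := fun k => ((prev k).2 : ℝ) with hTs
  have prev_succ : ∀ k, prev (k+1) = (nk k, Tfun k (prev k).1 (prev k).2) := fun k => rfl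
  have hTs1 : ∀ k, 1 ≤ Ts k := fun k => (prev k).2.2
  have hTstep : ∀ k, Ts k + 1 ≤ Ts (k+1) := fun k => hTsucc k (prev k).1 (prev k).2
  have hTs_ge : ∀ k : ℕ, (k:ℝ) + 1 ≤ Ts k := by
    intro k
    induction k with
    | zero => simpa using hTs1 0
    | succ k ih =>
        have := hTstep k
        push_cast
        linarith
  have hεpos : ∀ k, 0 < ε k := fun k => hepos k (prev k).1 (prev k).2
  have hmono : StrictMono nk := by
    apply strictMono_nat_of_lt_succ
    intro k
    have := hm (k+1) (prev (k+1)).1 (prev (k+1)).2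
    exact this
  have hεto : Tendsto ε atTop (nhds 0) := by
    refine squeeze_zero (fun k => (hεpos k).le) (fun k => hele k (prev k).1 (prev k).2) ?_
    exact tendsto_pow_atTop_nhds_zero_of_lt_one (by norm_num) (by norm_num)
  refine ⟨nk, ε, hmono, hεpos, hεto, ?_⟩
  intro s
  show (∑' k : ℕ, ‖Ghat (ε k) s - Fhat (μ (nk k)) s‖ ^ 2) ≤ 5
  have hA0 : (0:ℝ) ≤ |s| := abs_nonneg s
  have hterm_near : ∀ k, |s| ≤ Ts k → ‖Ghat (ε k) s - Fhat (μ (nk k)) s‖ ≤ myeta k := by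
    intro k hAk
    have h8 : 8 * π * Ts k * ε k ≤ myeta k := h8e k (prev k).1 (prev k).2
    have h8d' : 8 * π * Ts k * δ (nk k) ≤ myeta k := h8d k (prev k).1 (prev k).2
    have hδp := hδ_pos (nk k)
    have hη1 := eta_le_one k
    have hηp := eta_pos k
    have e0 : 0 ≤ (Ts k - |s|) * (2 * π * ε k) :=
      mul_nonneg (by linarith) (mul_nonneg (by positivity) (hεpos k).le)
    have e0d : 0 ≤ (Ts k - |s|) * (2 * π * δ (nk k)) :=
      mul_nonneg (by linarith) (mul_nonneg (by positivity) hδp.le)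
    have g1 : ‖Ghat (ε k) s - 1‖ ≤ 4 * π * |s| * ε k :=
      Ghat_near_one (ε k) s (hεpos k) (by nlinarith)
    haveI := hprob (nk k)
    have f1 : ‖Fhat (μ (nk k)) s - 1‖ ≤ 4 * π * |s| * δ (nk k) :=
      Fhat_near_one (μ (nk k)) (δ (nk k)) s hδp (hsupp (nk k)) (by nlinarith)
    have key : Ghat (ε k) s - Fhat (μ (nk k)) s =
        (Ghat (ε k) s - 1) - (Fhat (μ (nk k)) s - 1) := by ring
    rw [key]
    refine le_trans (norm_sub_le _ _) ?_
    nlinarith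
  have hterm_far : ∀ k, Ts (k+1) ≤ |s| → ‖Ghat (ε k) s - Fhat (μ (nk k)) s‖ ≤ myeta k := by
    intro k hk
    have hηp := eta_pos k
    have hA1 : (1:ℝ) ≤ |s| := le_trans (hTs1 (k+1)) hk
    have hs0 : s ≠ 0 := by
      intro h
      rw [h] at hA1
      simp at hA1
      linarith
    have hg := Ghat_far (ε k) s (hεpos k) hs0
    have h2 : 2 / myeta k ≤ π * |s| * ε k := hGe k (prev k).1 (prev k).2 s hk
    have h2p : (0:ℝ) < 2 / myeta k := by positivity
    have hg2 : 1 / (π * |s| * ε k) ≤ myeta k / 2 := by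
      have := one_div_le_one_div_of_le h2p h2
      rwa [one_div_div] at this
    have hf : ‖Fhat (μ (nk k)) s‖ ≤ myeta k / 2 := hF k (prev k).1 (prev k).2 s hk
    refine le_trans (norm_sub_le _ _) ?_
    linarith [le_trans hg hg2]
  have hterm_all : ∀ k, ‖Ghat (ε k) s - Fhat (μ (nk k)) s‖ ≤ 2 := by
    intro k
    haveI := hprob (nk k)
    refine le_trans (norm_sub_le _ _) ?_
    linarith [Ghat_norm_le (ε k) s (hεpos k), Fhat_norm_le (μ (nk k)) s]
  set bad : Set ℕ := {k | Ts k < |s| ∧ |s| < Ts (k+1)} with hbad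
  have hTmono : Monotone Ts := monotone_nat_of_le_succ (fun k => by linarith [hTstep k])
  have hbad_sub : ∀ j l, j ∈ bad → l ∈ bad → j = l := by
    intro j l hj hl
    by_contra hne
    rcases lt_or_gt_of_ne hne with h | h
    · have : Ts (j+1) ≤ Ts l := hTmono h
      exact absurd (lt_of_lt_of_le hj.2 (le_trans this hl.1.le)) (lt_irrefl _)
    · have : Ts (l+1) ≤ Ts j := hTmono h
      exact absurd (lt_of_lt_of_le hl.2 (le_trans this hj.1.le)) (lt_irrefl _)
  set g : ℕ → ℝ := fun k => (myeta k)^2 + bad.indicator (fun _ => (4:ℝ)) k with hg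
  have hle : ∀ k, ‖Ghat (ε k) s - Fhat (μ (nk k)) s‖ ^ 2 ≤ g k := by
    intro k
    by_cases hbk : k ∈ bad
    · rw [hg]
      simp only [Set.indicator_of_mem hbk]
      have h1 : ‖Ghat (ε k) s - Fhat (μ (nk k)) s‖ ^ 2 ≤ 2 ^ 2 :=
        pow_le_pow_left₀ (norm_nonneg _) (hterm_all k) 2
      have := sq_nonneg (myeta k)
      norm_num at h1 ⊢
      linarith
    · rw [hg]
      simp only [Set.indicator_of_notMem hbk, add_zero]
      have hbk' : Ts k < |s| → Ts (k+1) ≤ |s| := by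
        intro h1
        by_contra h2
        exact hbk ⟨h1, lt_of_not_ge h2⟩
      have hb : ‖Ghat (ε k) s - Fhat (μ (nk k)) s‖ ≤ myeta k := by
        rcases le_or_gt (|s|) (Ts k) with h1 | h1
        · exact hterm_near k h1
        · exact hterm_far k (hbk' h1)
      exact pow_le_pow_left₀ (norm_nonneg _) hb 2
  have heta_sq : ∀ k, (myeta k)^2 = (4:ℝ)⁻¹ ^ k * 4⁻¹ := by
    intro k
    rw [myeta, ← pow_mul, mul_comm (k+1) 2, pow_mul]
    norm_num [pow_succ]
  have hsum_eta : Summable (fun k => (myeta k)^2) := by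
    refine (summable_congr (fun k => (heta_sq k))).2 ?_
    exact (summable_geometric_of_lt_one (by norm_num) (by norm_num)).mul_right _
  have htsum_eta : (∑' k, (myeta k)^2) = 1/3 := by
    rw [tsum_congr heta_sq, tsum_mul_right, tsum_geometric_of_lt_one (by norm_num) (by norm_num)]
    norm_num
  have hind : Summable (fun k => bad.indicator (fun _ => (4:ℝ)) k) ∧
      (∑' k, bad.indicator (fun _ => (4:ℝ)) k) ≤ 4 := by
    rcases Set.eq_empty_or_nonempty bad with hbe | ⟨k0, hk0⟩
    · exact ⟨by simpa [hbe] using summable_zero, by simp [hbe]⟩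
    · have hsing : bad = {k0} :=
        Set.eq_singleton_iff_unique_mem.2 ⟨hk0, fun x hx => hbad_sub x k0 hx hk0⟩
      have hfe : (fun k => bad.indicator (fun _ => (4:ℝ)) k) =
          fun k => if k = k0 then (4:ℝ) else 0 := by
        funext k
        simp [hsing, Set.indicator_apply]
      rw [hfe]
      exact ⟨(hasSum_ite_eq k0 (4:ℝ)).summable, le_of_eq ((hasSum_ite_eq k0 (4:ℝ)).tsum_eq)⟩
  have hgsum : Summable g := hsum_eta.add hind.1
  have hterm_sum : Summable (fun k => ‖Ghat (ε k) s - Fhat (μ (nk k)) s‖ ^ 2) :=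
    Summable.of_nonneg_of_le (fun k => sq_nonneg _) hle hgsum
  refine le_trans (Summable.tsum_le_tsum hle hterm_sum hgsum) ?_
  rw [hg, Summable.tsum_add hsum_eta hind.1, htsum_eta]
  linarith [hind.2]
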